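/- Let R be a commutative ring, let 𝔸 = (A_1,…,A_a) and 𝔹 = (B_1,…,B_b) be tuples of elements of R, and write r(𝔸,𝔹) = Σ_{α ∈ P(a,b)} (−1)^{|α̂^t|} s_α(𝔸) · s_{α̂^t}(𝔹) (and analogously r(𝔹,𝔸) = Σ_{β ∈ P(b,a)} (−1)^{|β̂^t|} s_β(𝔹) · s_{β̂^t}(𝔸)). Then r(𝔹,𝔸) = (−1)^{ab} · r(𝔸,𝔹). -/

import Mathlib

open Finset

/-- Complete homogeneous symmetric polynomial `h_k` of a tuple
(sum of all monomials of degree `k`). -/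
noncomputable def hh {R : Type*} [CommRing R] {n : ℕ} (A : Fin n → R) (k : ℕ) : R :=
  ∑ c ∈ Finset.Nat.antidiagonalTuple n k, ∏ i, A i ^ c i

/-- Elementary symmetric polynomial `e_k` of a tuple. -/
noncomputable def ee {R : Type*} [CommRing R] {n : ℕ} (A : Fin n → R) (k : ℕ) : R :=
  ∑ s ∈ Finset.powersetCard k (Finset.univ : Finset (Fin n)), ∏ i ∈ s, A i

/-- `h` with integer index, vanishing for negative index. -/
noncomputable def hZ {R : Type*} [CommRing R] {n : ℕ} (A : Fin n → R) (k : ℤ) : R :=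
  if 0 ≤ k then hh A k.toNat else 0

/-- The Schur polynomial of a partition `α` with at most `ℓ` parts, evaluated at a
tuple, defined via the Jacobi–Trudi formula `s_α = det (h_{α_i + j - i})`. -/
noncomputable def schur {R : Type*} [CommRing R] {n ℓ : ℕ} (A : Fin n → R)
    (α : Fin ℓ → ℕ) : R :=
  Matrix.det (Matrix.of fun i j : Fin ℓ => hZ A ((α i : ℤ) + (j : ℕ) - (i : ℕ)))

/-- `P(a,b)`: partitions with at most `a` parts, each of size at most `b`,
recorded as weakly decreasing functions `Fin a → ℕ` with values `≤ b`. -/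
def box (a b : ℕ) : Finset (Fin a → ℕ) :=
  ((Finset.univ : Finset (Fin a → Fin (b + 1))).image fun f i => ((f i : ℕ))).filter
    fun α => ∀ i j : Fin a, i ≤ j → α j ≤ α i

/-- The transpose of a partition with at most `a` parts, recorded with `b` parts:
`(α^t)_j = #{i | α_i > j}` (0-indexed). -/
def tr {a : ℕ} (b : ℕ) (α : Fin a → ℕ) : Fin b → ℕ :=
  fun j => (Finset.univ.filter fun i : Fin a => (j : ℕ) < α i).card

/-- The complement `α̂` of a partition `α ∈ P(a,b)` inside the `a × b` box:
`α̂_{a+1-j} = b - α_j`. -/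
def boxCompl {a : ℕ} (b : ℕ) (α : Fin a → ℕ) : Fin a → ℕ :=
  fun i => b - α i.rev

/-- `α̂^t ∈ P(b,a)`: the transpose of the complement of `α ∈ P(a,b)`. -/
def compTr (a b : ℕ) (α : Fin a → ℕ) : Fin b → ℕ :=
  tr b (boxCompl b α)

/-- The number of boxes `|α|` of a partition. -/
def wt {a : ℕ} (α : Fin a → ℕ) : ℕ := ∑ i, α i

/-- `r(𝔸,𝔹) = Σ_{α ∈ P(a,b)} (−1)^{|α̂^t|} s_α(𝔸) · s_{α̂^t}(𝔹)`. -/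
noncomputable def rpoly {R : Type*} [CommRing R] {a b : ℕ} (A : Fin a → R) (B : Fin b → R) : R :=
  ∑ α ∈ box a b, (-1 : R) ^ wt (compTr a b α) * schur A α * schur B (compTr a b α)

section auxlemmas


variable {a b : ℕ}

lemma card_filter_rev {a : ℕ} (p : Fin a → Prop) [DecidablePred p] :
    (univ.filter fun i : Fin a => p i.rev).card = (univ.filter p).card :=
  Finset.card_nbij' (fun i => Fin.rev i) (fun i => Fin.rev i)
    (fun x hx => by simpa using hx) (fun x hx => by simpa using hx) (fun x _ => Fin.rev_rev x) (fun x _ => Fin.rev_rev x)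

lemma mem_box_iff {α : Fin a → ℕ} :
    α ∈ box a b ↔ (∀ i, α i ≤ b) ∧ ∀ i j : Fin a, i ≤ j → α j ≤ α i := by
  unfold _root_.box
  simp only [Finset.mem_filter, Finset.mem_image, Finset.mem_univ, true_and]
  constructor
  · rintro ⟨⟨f, rfl⟩, h2⟩
    exact ⟨fun i => Nat.lt_succ_iff.mp (f i).isLt, h2⟩
  · rintro ⟨h1, h2⟩
    exact ⟨⟨fun i => ⟨α i, Nat.lt_succ_of_le (h1 i)⟩, rfl⟩, h2⟩

lemma card_filter_lt {b m : ℕ} (h : m ≤ b) :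
    (univ.filter fun j : Fin b => (j : ℕ) < m).card = m := by
  rcases eq_or_lt_of_le h with rfl | hm
  · rw [Finset.filter_true_of_mem (fun j _ => j.isLt)]
    simp
  · have : (univ.filter fun j : Fin b => (j : ℕ) < m) = Finset.Iio ⟨m, hm⟩ := by
      ext j; simp [Fin.lt_def]
    rw [this, Fin.card_Iio]

lemma mem_iff_lt_card {a : ℕ} {S : Finset (Fin a)}
    (hS : ∀ i j : Fin a, i ≤ j → j ∈ S → i ∈ S) (i : Fin a) :
    i ∈ S ↔ (i : ℕ) < S.card := by
  constructor
  · intro hi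
    have h1 : Finset.Iic i ⊆ S := fun k hk => hS k i (Finset.mem_Iic.mp hk) hi
    have := Finset.card_le_card h1
    rw [Fin.card_Iic] at this
    omega
  · intro hlt
    by_contra hi
    have h1 : S ⊆ Finset.Iio i := by
      intro k hk
      rw [Finset.mem_Iio]
      by_contra hki
      exact hi (hS i k (le_of_not_gt hki) hk)
    have := Finset.card_le_card h1
    rw [Fin.card_Iio] at this
    omega

lemma tr_le {α : Fin a → ℕ} (j : Fin b) : tr b α j ≤ a := by
  calc tr b α j ≤ (univ : Finset (Fin a)).card :=
        Finset.card_le_card (Finset.filter_subset _ _)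
  _ = a := by simp

lemma tr_anti {α : Fin a → ℕ} {j j' : Fin b} (h : j ≤ j') : tr b α j' ≤ tr b α j := by
  apply Finset.card_le_card
  intro i hi
  simp only [tr, Finset.mem_filter, Finset.mem_univ, true_and] at *
  have : (j : ℕ) ≤ (j' : ℕ) := h
  omega

lemma tr_tr {α : Fin a → ℕ} (hb : ∀ i, α i ≤ b) (ha : ∀ i j : Fin a, i ≤ j → α j ≤ α i) :
    tr a (tr b α) = α := by
  funext i
  have key : ∀ j : Fin b, ((i : ℕ) < tr b α j ↔ (j : ℕ) < α i) := by
    intro j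
    unfold tr
    rw [← mem_iff_lt_card (S := univ.filter fun i' : Fin a => (j : ℕ) < α i') ?_ i]
    · simp
    · intro i1 i2 h12 h2
      simp only [Finset.mem_filter, Finset.mem_univ, true_and] at *
      exact lt_of_lt_of_le h2 (ha i1 i2 h12)
  show (univ.filter fun j : Fin b => (i : ℕ) < tr b α j).card = α i
  rw [Finset.filter_congr (fun j _ => by simpa using (key j))]
  exact card_filter_lt (hb i)

lemma boxCompl_tr {a b : ℕ} (δ : Fin a → ℕ) :
    boxCompl a (tr b δ) = tr b (boxCompl b δ) := by
  funext j
  have hR : tr b (boxCompl b δ) j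
      = (univ.filter fun i : Fin a => (j : ℕ) + δ i < b).card := by
    show (univ.filter fun i : Fin a => (fun i' : Fin a => (j : ℕ) < b - δ i') i.rev).card = _
    rw [card_filter_rev (fun i : Fin a => (j : ℕ) < b - δ i)]
    rw [Finset.filter_congr (q := fun i : Fin a => (j : ℕ) + δ i < b)
      (fun i _ => by constructor <;> (intro; omega))]
  have hsum := Finset.card_filter_add_card_filter_not
      (s := (univ : Finset (Fin a))) (p := fun i => ((j.rev : ℕ) < δ i))
  have hneg : (univ.filter fun i : Fin a => ¬ ((j.rev : ℕ) < δ i)) =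
      (univ.filter fun i : Fin a => (j : ℕ) + δ i < b) := by
    apply Finset.filter_congr
    intro i _
    have hj := j.isLt
    have hrev := Fin.val_rev j
    constructor <;> (intro; omega)
  rw [hneg] at hsum
  show a - tr b δ j.rev = tr b (boxCompl b δ) j
  rw [hR]
  show a - (univ.filter fun i : Fin a => ((j.rev : ℕ) < δ i)).card = _
  simp only [Finset.card_univ, Fintype.card_fin] at hsum
  omega

lemma boxCompl_boxCompl {α : Fin a → ℕ} (h : ∀ i, α i ≤ b) :
    boxCompl b (boxCompl b α) = α := by
  funext i
  show b - (b - α i.rev.rev) = α i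
  rw [Fin.rev_rev]
  have := h i
  omega

lemma compTr_mem (α : Fin a → ℕ) : compTr a b α ∈ box b a := by
  rw [mem_box_iff]
  exact ⟨fun j => tr_le j, fun j j' h => tr_anti h⟩

lemma compTr_compTr {α : Fin a → ℕ} (hα : α ∈ box a b) :
    compTr b a (compTr a b α) = α := by
  obtain ⟨h1, h2⟩ := mem_box_iff.mp hα
  show tr a (boxCompl a (tr b (boxCompl b α))) = α
  rw [boxCompl_tr, boxCompl_boxCompl h1]
  exact tr_tr h1 h2

lemma wt_tr {γ : Fin a → ℕ} (h : ∀ i, γ i ≤ b) : wt (tr b γ) = wt γ := by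
  unfold wt tr
  simp_rw [Finset.card_filter]
  rw [Finset.sum_comm]
  apply Finset.sum_congr rfl
  intro i _
  rw [← Finset.card_filter]
  exact card_filter_lt (h i)

lemma wt_boxCompl {α : Fin a → ℕ} (h : ∀ i, α i ≤ b) :
    wt (boxCompl b α) = a * b - wt α := by
  unfold wt boxCompl
  have h0 : ∑ i : Fin a, (b - α i.rev) = ∑ i : Fin a, (b - α i) :=
    Fintype.sum_bijective Fin.rev (Fin.rev_involutive.bijective) _ _ (fun i => rfl)
  rw [h0]
  have h2 : (∑ i : Fin a, (b - α i)) + ∑ i : Fin a, α i = a * b := by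
    rw [← Finset.sum_add_distrib]
    have hp : ∀ i : Fin a, b - α i + α i = b := fun i => Nat.sub_add_cancel (h i)
    rw [Finset.sum_congr rfl (fun i _ => hp i)]
    simp [mul_comm]
  omega

lemma wt_le {α : Fin a → ℕ} (h : ∀ i, α i ≤ b) : wt α ≤ a * b := by
  calc wt α ≤ ∑ _i : Fin a, b := Finset.sum_le_sum (fun i _ => h i)
  _ = a * b := by simp [mul_comm]

lemma wt_compTr {α : Fin a → ℕ} (hα : α ∈ box a b) :
    wt (compTr a b α) = a * b - wt α := by
  obtain ⟨h1, h2⟩ := mem_box_iff.mp hα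
  show wt (tr b (boxCompl b α)) = _
  rw [wt_tr (γ := boxCompl b α) (fun i => Nat.sub_le _ _), wt_boxCompl h1]

end auxlemmas

/-- `r(𝔹,𝔸) = (−1)^{ab} · r(𝔸,𝔹)`. -/
theorem statement1 {R : Type*} [CommRing R] {a b : ℕ} (A : Fin a → R) (B : Fin b → R) :
    rpoly B A = (-1 : R) ^ (a * b) * rpoly A B := by
  have h1 : rpoly B A = ∑ α ∈ box a b,
      (-1 : R) ^ wt α * schur B (compTr a b α) * schur A α := by
    unfold rpoly
    refine Finset.sum_nbij' (compTr b a) (compTr a b)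
      (fun β _ => compTr_mem β) (fun α _ => compTr_mem α)
      (fun β hβ => compTr_compTr hβ) (fun α hα => compTr_compTr hα) ?_
    intro β hβ
    rw [compTr_compTr hβ]
  rw [h1]
  unfold rpoly
  rw [Finset.mul_sum]
  apply Finset.sum_congr rfl
  intro α hα
  obtain ⟨hle, -⟩ := mem_box_iff.mp hα
  have hwt : wt (compTr a b α) = a * b - wt α := wt_compTr hα
  have hwle : wt α ≤ a * b := wt_le hle
  rw [hwt]
  have hsign : (-1 : R) ^ (a * b) * (-1 : R) ^ (a * b - wt α) = (-1 : R) ^ wt α := by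
    rw [← pow_add, neg_one_pow_eq_pow_mod_two, neg_one_pow_eq_pow_mod_two (n := wt α)]
    congr 1
    omega
  calc (-1 : R) ^ wt α * schur B (compTr a b α) * schur A α
      = ((-1 : R) ^ (a * b) * (-1 : R) ^ (a * b - wt α)) *
          schur B (compTr a b α) * schur A α := by rw [hsign]
  _ = (-1 : R) ^ (a * b) *
        ((-1 : R) ^ (a * b - wt α) * schur A α * schur B (compTr a b α)) := by ring
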